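/- Let n, N be positive natural numbers and A, W, P, G, G_i : Matrix (Fin n) (Fin n) ℝ with P invertible and symmetric (Pᵀ = P) and G_i symmetric. Define D = -P⁻¹ * A - Aᵀ * P⁻¹ - P⁻¹ * W * P⁻¹ + G and A_i = A - (N : ℝ) • (P * G_i). Then P⁻¹ * A_i + A_iᵀ * P⁻¹ + D = G - P⁻¹ * W * P⁻¹ - (2 * N : ℝ) • G_i; moreover, if W is positive semidefinite and G_i is positive semidefinite, then the matrix G - (P⁻¹ * A_i + A_iᵀ * P⁻¹ + D) is positive semidefinite. -/

import Mathlib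

open Matrix

theorem stmt4 {n N : ℕ} (hn : 0 < n) (hN : 0 < N)
    (A W P G G_i : Matrix (Fin n) (Fin n) ℝ)
    (hP : IsUnit P) (hPsym : Pᵀ = P) (hGisym : G_iᵀ = G_i)
    (D A_i : Matrix (Fin n) (Fin n) ℝ)
    (hD : D = -P⁻¹ * A - Aᵀ * P⁻¹ - P⁻¹ * W * P⁻¹ + G)
    (hAi : A_i = A - (N : ℝ) • (P * G_i)) :
    P⁻¹ * A_i + A_iᵀ * P⁻¹ + D = G - P⁻¹ * W * P⁻¹ - (2 * N : ℝ) • G_i ∧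
      (W.PosSemidef → G_i.PosSemidef →
        (G - (P⁻¹ * A_i + A_iᵀ * P⁻¹ + D)).PosSemidef) := by
  have hPinv : P⁻¹ * P = 1 := nonsing_inv_mul P ((isUnit_iff_isUnit_det P).mp hP)
  have hPinv' : P * P⁻¹ = 1 := mul_nonsing_inv P ((isUnit_iff_isUnit_det P).mp hP)
  have key : P⁻¹ * A_i + A_iᵀ * P⁻¹ + D = G - P⁻¹ * W * P⁻¹ - (2 * N : ℝ) • G_i := by
    subst hD hAi
    rw [transpose_sub, transpose_smul, transpose_mul, hPsym, hGisym]
    rw [Matrix.mul_sub, Matrix.sub_mul, Matrix.mul_smul, Matrix.smul_mul]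
    rw [← Matrix.mul_assoc P⁻¹ P G_i, hPinv, Matrix.mul_assoc G_i P P⁻¹, hPinv']
    rw [Matrix.one_mul, Matrix.mul_one]
    have h2 : (2 * (N:ℝ)) • G_i = (N:ℝ) • G_i + (N:ℝ) • G_i := by
      rw [two_mul, add_smul]
    rw [h2, Matrix.neg_mul]
    abel
  refine ⟨key, fun hW hGi => ?_⟩
  rw [key]
  have heq : G - (G - P⁻¹ * W * P⁻¹ - (2 * N : ℝ) • G_i)
      = P⁻¹ * W * P⁻¹ + (2 * N : ℝ) • G_i := by abel
  rw [heq]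
  apply PosSemidef.add
  · have hct : (P⁻¹)ᴴ = P⁻¹ := by
      rw [conjTranspose, Matrix.transpose_nonsing_inv, hPsym]
      ext i j; simp
    have := hW.mul_mul_conjTranspose_same (P⁻¹)
    rwa [hct] at this
  · constructor
    · unfold Matrix.IsHermitian
      rw [conjTranspose_smul, hGi.1.eq]
      simp
    · intro x
      have := hGi.2 x
      have h2N : (0:ℝ) ≤ 2 * N := by positivity
      convert mul_nonneg h2N this using 1
      simp only [Finsupp.sum, Finset.mul_sum, Matrix.smul_apply, smul_eq_mul]
      exact Finset.sum_congr rfl fun i _ => Finset.sum_congr rfl fun j _ => by ring
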